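/- Let G be a finite simple graph with edge ideal I = I(G) ⊆ S = K[x_1, ..., x_n]. A squarefree monomial m is a minimal monomial generator of the second secant power I^{2} if and only if the induced subgraph G_m of G on the vertices dividing m is an induced odd cycle. -/
import Mathlib


open MvPolynomial

/-- A finite simple graph on vertex set `Fin n`, presented as a hypergraph all of whose
edges have cardinality exactly two. -/
structure GraphOn (n : ℕ) where
  edges : Finset (Finset (Fin n))
  card_eq : ∀ e ∈ edges, e.card = 2

/-- The edge ideal of `G`. -/
noncomputable def edgeIdeal {n : ℕ} (K : Type*) [Field K] (G : GraphOn n) :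
    Ideal (MvPolynomial (Fin n) K) :=
  Ideal.span {m | ∃ e ∈ G.edges, m = ∏ i ∈ e, X i}

/-- The induced subgraph of `G` on `W` is an odd cycle: `W` has odd cardinality at least
three, and the vertices of `W` can be arranged cyclically so that the edges of `G`
contained in `W` are exactly the pairs of consecutive vertices. -/
def IsInducedOddCycle {n : ℕ} (G : GraphOn n) (W : Finset (Fin n)) : Prop :=
  3 ≤ W.card ∧ Odd W.card ∧
    ∃ f : ZMod W.card → Fin n, Function.Injective f ∧ (∀ i, f i ∈ W) ∧
      (∀ w ∈ W, ∃ i, f i = w) ∧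
      (∀ i, ({f i, f (i + 1)} : Finset (Fin n)) ∈ G.edges) ∧
      (∀ e ∈ G.edges, e ⊆ W → ∃ i, e = ({f i, f (i + 1)} : Finset (Fin n)))

/-- The `k`-th secant power `I^{k}` of an ideal `I ⊆ S = K[x_1, …, x_n]`:
working in `T = K[V, Y_1, …, Y_k]` (with `y_{i,j}` encoded as `X (Sum.inr (i, j))` and
`x_j` as `X (Sum.inl j)`), it is the contraction to `S` of
`I(Y_1) + ⋯ + I(Y_k) + ({x_j − (y_{1,j} + ⋯ + y_{k,j})})`. -/
noncomputable def secantPower {n : ℕ} {K : Type*} [Field K]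
    (I : Ideal (MvPolynomial (Fin n) K)) (k : ℕ) : Ideal (MvPolynomial (Fin n) K) :=
  Ideal.comap (rename (Sum.inl : Fin n → Fin n ⊕ (Fin k × Fin n)))
    ((⨆ i : Fin k, Ideal.map (rename fun j : Fin n => (Sum.inr (i, j) : Fin n ⊕ (Fin k × Fin n))) I)
      ⊔ Ideal.span {p | ∃ j : Fin n,
          p = X (Sum.inl j) - ∑ i : Fin k, X (Sum.inr (i, j) : Fin n ⊕ (Fin k × Fin n))})

/-- (aux developments below) -/
def Indep {n : ℕ} (G : GraphOn n) (A : Finset (Fin n)) : Prop := ∀ e ∈ G.edges, ¬ e ⊆ A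

def TwoCol {n : ℕ} (G : GraphOn n) (W : Finset (Fin n)) : Prop :=
  ∃ A ⊆ W, Indep G A ∧ Indep G (W \ A)

theorem mem_secant_of_not_twoCol {n : ℕ} (K : Type*) [Field K] (G : GraphOn n)
    (W : Finset (Fin n)) (h : ¬ TwoCol G W) :
    (∏ i ∈ W, (X i : MvPolynomial (Fin n) K)) ∈ secantPower (edgeIdeal K G) 2 := by
  classical
  set T := MvPolynomial (Fin n ⊕ (Fin 2 × Fin n)) K
  set J : Ideal T :=
    ((⨆ i : Fin 2, Ideal.map (rename fun j : Fin n => (Sum.inr (i, j) : Fin n ⊕ (Fin 2 × Fin n)))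
        (edgeIdeal K G))
      ⊔ Ideal.span {p | ∃ j : Fin n,
          p = X (Sum.inl j) - ∑ i : Fin 2, X (Sum.inr (i, j) : Fin n ⊕ (Fin 2 × Fin n))}) with hJ
  show rename Sum.inl (∏ i ∈ W, (X i : MvPolynomial (Fin n) K)) ∈ J
  have hlin : ∀ j : Fin n,
      (X (Sum.inl j) - ∑ i : Fin 2, X (Sum.inr (i, j)) : T) ∈ J := by
    intro j
    exact Ideal.mem_sup_right (Ideal.subset_span ⟨j, rfl⟩)
  have hedge : ∀ (i : Fin 2) (e : Finset (Fin n)), e ∈ G.edges →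
      (∏ j ∈ e, (X (Sum.inr (i, j)) : T)) ∈ J := by
    intro i e he
    apply Ideal.mem_sup_left
    apply Ideal.mem_iSup_of_mem i
    have : (∏ j ∈ e, (X (Sum.inr (i, j)) : T)) =
        rename (fun j : Fin n => (Sum.inr (i, j) : Fin n ⊕ (Fin 2 × Fin n)))
          (∏ j ∈ e, (X j : MvPolynomial (Fin n) K)) := by
      simp [map_prod]
    rw [this]
    exact Ideal.mem_map_of_mem _ (Ideal.subset_span ⟨e, he, rfl⟩)
  -- rewrite the product
  rw [map_prod]
  simp only [rename_X]
  have key : (∏ j ∈ W, (X (Sum.inl j) : T)) =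
      ∑ t ∈ W.powerset, (∏ j ∈ t, ((X (Sum.inl j) : T) - ∑ i : Fin 2, X (Sum.inr (i, j)))) *
        ∏ j ∈ W \ t, (∑ i : Fin 2, (X (Sum.inr (i, j)) : T)) := by
    rw [← Finset.prod_add]
    apply Finset.prod_congr rfl
    intro j _
    ring
  rw [key]
  apply Ideal.sum_mem
  intro t ht
  rcases t.eq_empty_or_nonempty with rfl | ⟨j0, hj0⟩
  · -- main term: expand the product of sums
    rw [Finset.prod_empty, one_mul, Finset.sdiff_empty]
    have expand : (∏ j ∈ W, (∑ i : Fin 2, (X (Sum.inr (i, j)) : T))) =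
        ∑ A ∈ W.powerset, (∏ j ∈ A, (X (Sum.inr ((0 : Fin 2), j)) : T)) *
          ∏ j ∈ W \ A, (X (Sum.inr ((1 : Fin 2), j)) : T) := by
      rw [← Finset.prod_add]
      apply Finset.prod_congr rfl
      intro j _
      simp [Fin.sum_univ_two]
    rw [expand]
    apply Ideal.sum_mem
    intro A hA
    rw [Finset.mem_powerset] at hA
    have : ¬ (Indep G A ∧ Indep G (W \ A)) := fun hc => h ⟨A, hA, hc⟩
    rw [not_and_or] at this
    rcases this with hbad | hbad
    · simp only [Indep, not_forall, not_not] at hbad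
      obtain ⟨e, he, hsub⟩ := hbad
      have hdvd : (∏ j ∈ e, (X (Sum.inr ((0 : Fin 2), j)) : T)) ∣
          (∏ j ∈ A, (X (Sum.inr ((0 : Fin 2), j)) : T)) *
            ∏ j ∈ W \ A, (X (Sum.inr ((1 : Fin 2), j)) : T) :=
        (Finset.prod_dvd_prod_of_subset _ _ _ hsub).mul_right _
      obtain ⟨c, hc⟩ := hdvd
      rw [hc]
      exact Ideal.mul_mem_right _ _ (hedge 0 e he)
    · simp only [Indep, not_forall, not_not] at hbad
      obtain ⟨e, he, hsub⟩ := hbad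
      have hdvd : (∏ j ∈ e, (X (Sum.inr ((1 : Fin 2), j)) : T)) ∣
          (∏ j ∈ A, (X (Sum.inr ((0 : Fin 2), j)) : T)) *
            ∏ j ∈ W \ A, (X (Sum.inr ((1 : Fin 2), j)) : T) :=
        (Finset.prod_dvd_prod_of_subset _ _ _ hsub).mul_left _
      obtain ⟨c, hc⟩ := hdvd
      rw [hc]
      exact Ideal.mul_mem_right _ _ (hedge 1 e he)
  · -- term with a linear factor
    have hdvd : ((X (Sum.inl j0) : T) - ∑ i : Fin 2, X (Sum.inr (i, j0))) ∣
        (∏ j ∈ t, ((X (Sum.inl j) : T) - ∑ i : Fin 2, X (Sum.inr (i, j)))) *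
          ∏ j ∈ W \ t, (∑ i : Fin 2, (X (Sum.inr (i, j)) : T)) :=
      (Finset.dvd_prod_of_mem _ hj0).mul_right _
    obtain ⟨c, hc⟩ := hdvd
    rw [hc]
    exact Ideal.mul_mem_right _ _ (hlin j0)

theorem notMem_secant_of_twoCol {n : ℕ} (K : Type*) [Field K] (G : GraphOn n)
    (W : Finset (Fin n)) (h : TwoCol G W) :
    (∏ i ∈ W, (X i : MvPolynomial (Fin n) K)) ∉ secantPower (edgeIdeal K G) 2 := by
  classical
  obtain ⟨A, hAW, hA, hB⟩ := h
  set S := MvPolynomial (Fin n) K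
  -- evaluation map
  set φ : MvPolynomial (Fin n ⊕ (Fin 2 × Fin n)) K →ₐ[K] S :=
    aeval (fun v => match v with
      | Sum.inl j => if j ∈ W then (X j : S) else 0
      | Sum.inr (i, j) =>
          if i = 0 then (if j ∈ A then (X j : S) else 0)
          else (if j ∈ W \ A then (X j : S) else 0)) with hφ
  intro hmem
  rw [secantPower, Ideal.mem_comap] at hmem
  -- J maps to zero
  have hJ : ∀ q ∈ ((⨆ i : Fin 2, Ideal.map
        (rename fun j : Fin n => (Sum.inr (i, j) : Fin n ⊕ (Fin 2 × Fin n))) (edgeIdeal K G))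
      ⊔ Ideal.span {p | ∃ j : Fin n,
          p = X (Sum.inl j) - ∑ i : Fin 2, X (Sum.inr (i, j) : Fin n ⊕ (Fin 2 × Fin n))}),
      φ q = 0 := by
    intro q hq
    have : ((⨆ i : Fin 2, Ideal.map
        (rename fun j : Fin n => (Sum.inr (i, j) : Fin n ⊕ (Fin 2 × Fin n))) (edgeIdeal K G))
      ⊔ Ideal.span {p | ∃ j : Fin n,
          p = X (Sum.inl j) - ∑ i : Fin 2, X (Sum.inr (i, j) : Fin n ⊕ (Fin 2 × Fin n))})
        ≤ RingHom.ker (φ : MvPolynomial (Fin n ⊕ (Fin 2 × Fin n)) K →+* S) := by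
      apply sup_le
      · apply iSup_le
        intro i
        rw [Ideal.map_le_iff_le_comap, edgeIdeal, Ideal.span_le]
        rintro m ⟨e, he, rfl⟩
        simp only [SetLike.mem_coe, Ideal.mem_comap, RingHom.mem_ker]
        show φ (rename _ (∏ j ∈ e, X j)) = 0
        rw [map_prod]
        simp only [rename_X, map_prod, hφ, aeval_X]
        fin_cases i
        · obtain ⟨j, hj, hjA⟩ := Finset.not_subset.mp (hA e he)
          apply Finset.prod_eq_zero hj
          simp [hjA]
        · obtain ⟨j, hj, hjB⟩ := Finset.not_subset.mp (hB e he)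
          apply Finset.prod_eq_zero hj
          simp [hjB]
      · rw [Ideal.span_le]
        rintro p ⟨j, rfl⟩
        simp only [SetLike.mem_coe, RingHom.mem_ker, map_sub, map_sum]
        simp only [hφ, aeval_X, Fin.sum_univ_two]
        by_cases hjW : j ∈ W
        · by_cases hjA : j ∈ A
          · have : j ∉ W \ A := by simp [hjA]
            simp [hjW, hjA, this]
          · have : j ∈ W \ A := Finset.mem_sdiff.mpr ⟨hjW, hjA⟩
            simp [hjW, hjA, this]
        · have h1 : j ∉ A := fun hc => hjW (hAW hc)
          have h2 : j ∉ W \ A := by simp [hjW]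
          simp [hjW, h1, h2]
    exact this hq
  have h0 := hJ _ hmem
  rw [map_prod] at h0
  simp only [rename_X] at h0
  rw [map_prod] at h0
  have : ∀ j ∈ W, φ (X (Sum.inl j)) = (X j : S) := by
    intro j hj
    simp [hφ, hj]
  rw [Finset.prod_congr rfl this] at h0
  exact Finset.prod_ne_zero_iff.mpr (fun j _ => X_ne_zero j) h0

theorem not_twoCol_of_cycle {n : ℕ} (G : GraphOn n) (W : Finset (Fin n))
    (h : IsInducedOddCycle G W) : ¬ TwoCol G W := by
  classical
  obtain ⟨hs3, hodd, f, hinj, hmem, hsurj, hedge, hind⟩ := h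
  rintro ⟨A, hAW, hA, hB⟩
  have halt : ∀ i : ZMod W.card, (f (i + 1) ∈ A ↔ ¬ f i ∈ A) := by
    intro i
    have h1 := hA _ (hedge i)
    have h2 := hB _ (hedge i)
    constructor
    · intro h3 h4
      apply h1
      intro x hx
      simp only [Finset.mem_insert, Finset.mem_singleton] at hx
      rcases hx with rfl | rfl <;> assumption
    · intro h3
      by_contra h4
      apply h2
      intro x hx
      simp only [Finset.mem_insert, Finset.mem_singleton] at hx
      rcases hx with rfl | rfl <;> exact Finset.mem_sdiff.mpr ⟨hmem _, by assumption⟩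
  have key : ∀ k : ℕ, (f (k : ZMod W.card) ∈ A ↔ (Even k ↔ f 0 ∈ A)) := by
    intro k
    induction k with
    | zero => simp
    | succ m ih =>
      have h5 : ((m + 1 : ℕ) : ZMod W.card) = (m : ZMod W.card) + 1 := by push_cast; ring
      rw [h5, halt, ih, Nat.even_add_one]
      tauto
  have h0 := key W.card
  rw [ZMod.natCast_self] at h0
  have hne := Nat.not_even_iff_odd.mpr hodd
  tauto

theorem twoCol_of_ssubset_cycle {n : ℕ} (G : GraphOn n) (W : Finset (Fin n))
    (h : IsInducedOddCycle G W) : ∀ W' ⊂ W, TwoCol G W' := by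
  classical
  obtain ⟨hs3, hodd, f, hinj, hmem, hsurj, hedge, hind⟩ := h
  haveI : NeZero W.card := ⟨by omega⟩
  haveI : Fact (1 < W.card) := ⟨by omega⟩
  intro W' hW'
  obtain ⟨w, hwW, hwW'⟩ := Finset.exists_of_ssubset hW'
  obtain ⟨i0, rfl⟩ := hsurj w hwW
  set A : Finset (Fin n) :=
    W'.filter (fun x => ∃ i : ZMod W.card, f i = x ∧ Even ((i - i0).val - 1)) with hAdef
  have hmemA : ∀ j : ZMod W.card, (f j ∈ A ↔ (f j ∈ W' ∧ Even ((j - i0).val - 1))) := by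
    intro j
    rw [hAdef, Finset.mem_filter]
    constructor
    · rintro ⟨h1, i', hi', h2⟩
      exact ⟨h1, by rwa [hinj hi'] at h2⟩
    · rintro ⟨h1, h2⟩
      exact ⟨h1, j, rfl, h2⟩
  -- key numeric fact for an edge inside W'
  have hnum : ∀ i : ZMod W.card, f i ∈ W' → f (i + 1) ∈ W' →
      ((i + 1) - i0).val - 1 = ((i - i0).val - 1) + 1 ∧ 1 ≤ (i - i0).val := by
    intro i hfi hfi1
    have hii0 : i ≠ i0 := fun hc => hwW' (hc ▸ hfi)
    have hii0' : i + 1 ≠ i0 := fun hc => hwW' (hc ▸ hfi1)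
    have ha0 : i - i0 ≠ 0 := fun hc => hii0 (by rwa [sub_eq_zero] at hc)
    have hav : 1 ≤ (i - i0).val :=
      Nat.one_le_iff_ne_zero.mpr (fun hc => ha0 ((ZMod.val_eq_zero _).mp hc))
    have havlt : (i - i0).val < W.card := ZMod.val_lt _
    have havlt' : (i - i0).val < W.card - 1 := by
      rcases Nat.lt_or_ge (i - i0).val (W.card - 1) with h' | h'
      · exact h'
      · exfalso
        apply hii0'
        have hv : (i - i0).val = W.card - 1 := by omega
        have hz : ((i - i0) + 1).val = 0 := by
          rw [ZMod.val_add, ZMod.val_one, hv, Nat.sub_add_cancel (by omega), Nat.mod_self]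
        have h2 : (i - i0) + 1 = 0 := (ZMod.val_eq_zero _).mp hz
        linear_combination (norm := ring_nf) h2
    have hval1 : ((i - i0) + 1).val = (i - i0).val + 1 := by
      rw [ZMod.val_add_of_lt]
      · rw [ZMod.val_one]
      · rw [ZMod.val_one]; omega
    have hstep : (i + 1) - i0 = (i - i0) + 1 := by ring
    rw [hstep, hval1]
    exact ⟨by omega, hav⟩
  refine ⟨A, by rw [hAdef]; exact Finset.filter_subset _ _, ?_, ?_⟩
  · intro e he hsub
    have hsubW' : e ⊆ W' := hsub.trans (hAdef ▸ Finset.filter_subset _ _)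
    obtain ⟨i, rfl⟩ := hind e he (hsubW'.trans hW'.subset)
    have hfi : f i ∈ W' := hsubW' (by simp)
    have hfi1 : f (i + 1) ∈ W' := hsubW' (by simp)
    have e1 := (hmemA i).mp (hsub (by simp))
    have e2 := (hmemA (i + 1)).mp (hsub (by simp))
    obtain ⟨hstep, hav⟩ := hnum i hfi hfi1
    rw [hstep] at e2
    obtain ⟨c1, hc1⟩ := e1.2
    obtain ⟨c2, hc2⟩ := e2.2
    omega
  · intro e he hsub
    have hsubW' : e ⊆ W' := hsub.trans (Finset.sdiff_subset)
    obtain ⟨i, rfl⟩ := hind e he (hsubW'.trans hW'.subset)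
    have hfi : f i ∈ W' := hsubW' (by simp)
    have hfi1 : f (i + 1) ∈ W' := hsubW' (by simp)
    have e1 := Finset.mem_sdiff.mp (hsub (show f i ∈ ({f i, f (i+1)} : Finset (Fin n)) by simp))
    have e2 := Finset.mem_sdiff.mp
      (hsub (show f (i+1) ∈ ({f i, f (i+1)} : Finset (Fin n)) by simp))
    obtain ⟨hstep, hav⟩ := hnum i hfi hfi1
    have p1 : ¬ Even ((i - i0).val - 1) := fun hc => e1.2 ((hmemA i).mpr ⟨hfi, hc⟩)
    have p2 : ¬ Even (((i + 1) - i0).val - 1) := fun hc => e2.2 ((hmemA (i + 1)).mpr ⟨hfi1, hc⟩)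
    rw [hstep] at p2
    rw [Nat.not_even_iff] at p1 p2
    omega


section Walks

def Adj {n : ℕ} (G : GraphOn n) (W : Finset (Fin n)) (u v : Fin n) : Prop :=
  ({u, v} : Finset (Fin n)) ∈ G.edges ∧ u ∈ W ∧ v ∈ W

def WalkN {n : ℕ} (G : GraphOn n) (W : Finset (Fin n)) : ℕ → Fin n → Fin n → Prop
  | 0, u, v => u = v ∧ u ∈ W
  | (k+1), u, v => ∃ w, WalkN G W k u w ∧ Adj G W w v

variable {n : ℕ} {G : GraphOn n} {W : Finset (Fin n)}

theorem Adj.symm' (h : Adj G W u v) : Adj G W v u :=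
  ⟨by rw [Finset.pair_comm]; exact h.1, h.2.2, h.2.1⟩

theorem Adj.ne (h : Adj G W u v) : u ≠ v := by
  rintro rfl
  have := G.card_eq _ h.1
  simp at this

theorem WalkN.left_mem : ∀ {k u v}, WalkN G W k u v → u ∈ W := by
  intro k
  induction k with
  | zero => intro u v h; exact h.2
  | succ m ih => rintro u v ⟨w, hw, _⟩; exact ih hw

theorem WalkN.right_mem : ∀ {k u v}, WalkN G W k u v → v ∈ W := by
  intro k
  induction k with
  | zero => rintro u v ⟨rfl, h⟩; exact h
  | succ m ih => rintro u v ⟨w, hw, ha⟩; exact ha.2.2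

theorem WalkN.nil (h : u ∈ W) : WalkN G W 0 u u := ⟨rfl, h⟩

theorem WalkN.single (h : Adj G W u v) : WalkN G W 1 u v := ⟨u, ⟨rfl, h.2.1⟩, h⟩

theorem WalkN.trans : ∀ {m k u v w}, WalkN G W k u v → WalkN G W m v w →
    WalkN G W (k + m) u w := by
  intro m
  induction m with
  | zero => rintro k u v w h1 ⟨rfl, _⟩; exact h1
  | succ m ih =>
    rintro k u v w h1 ⟨x, hx, ha⟩
    exact ⟨x, ih h1 hx, ha⟩

theorem WalkN.symm : ∀ {k u v}, WalkN G W k u v → WalkN G W k v u := by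
  intro k
  induction k with
  | zero => rintro u v ⟨rfl, h⟩; exact ⟨rfl, h⟩
  | succ m ih =>
    rintro u v ⟨w, hw, ha⟩
    have h1 : WalkN G W 1 v w := WalkN.single ha.symm'
    have := h1.trans (ih hw)
    rwa [Nat.add_comm] at this

/-- Walks along a function with consecutive adjacency. -/
theorem walk_of_fun (F : ℕ → Fin n) (k : ℕ) (h : ∀ i < k, Adj G W (F i) (F (i+1)))
    (h0 : F 0 ∈ W) : WalkN G W k (F 0) (F k) := by
  induction k with
  | zero => exact ⟨rfl, h0⟩
  | succ m ih =>
    exact ⟨F m, ih (fun i hi => h i (by omega)), h m (by omega)⟩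

/-- Conversely, a walk yields a function. -/
theorem WalkN.exists_fun : ∀ {k u v}, WalkN G W k u v →
    ∃ F : ℕ → Fin n, F 0 = u ∧ F k = v ∧ ∀ i < k, Adj G W (F i) (F (i+1)) := by
  intro k
  induction k with
  | zero =>
    rintro u v ⟨rfl, h⟩
    exact ⟨fun _ => u, rfl, rfl, by omega⟩
  | succ m ih =>
    rintro u v ⟨w, hw, ha⟩
    obtain ⟨F, hF0, hFm, hFadj⟩ := ih hw
    refine ⟨fun i => if i ≤ m then F i else v, by simp [hF0], by simp, ?_⟩
    intro i hi
    rcases Nat.lt_or_ge i m with h' | h'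
    · simpa [Nat.le_of_lt h', Nat.succ_le_of_lt h'] using hFadj i h'
    · have : i = m := by omega
      subst this
      simpa [hFm] using ha

theorem exists_odd_closed_of_not_twoCol (h : ¬ TwoCol G W) :
    ∃ k v, Odd k ∧ WalkN G W k v v := by
  classical
  by_contra hno
  push_neg at hno
  apply h
  -- representative of a reachability class
  set rep : Fin n → Fin n := fun v =>
    if h : (Finset.univ.filter (fun u => ∃ k, WalkN G W k u v)).Nonempty
    then (Finset.univ.filter (fun u => ∃ k, WalkN G W k u v)).min' h else v with hrep
  have rep_reach : ∀ v ∈ W, ∃ k, WalkN G W k (rep v) v := by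
    intro v hv
    have hne : (Finset.univ.filter (fun u => ∃ k, WalkN G W k u v)).Nonempty := by
      refine ⟨v, ?_⟩
      simp only [Finset.mem_filter, Finset.mem_univ, true_and]
      exact ⟨0, WalkN.nil hv⟩
    have := Finset.min'_mem _ hne
    rw [Finset.mem_filter] at this
    rw [hrep]
    simp only [dif_pos hne]
    exact this.2
  have rep_adj : ∀ u v, Adj G W u v → rep u = rep v := by
    intro u v ha
    have hset : (Finset.univ.filter (fun x => ∃ k, WalkN G W k x u)) =
        (Finset.univ.filter (fun x => ∃ k, WalkN G W k x v)) := by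
      ext x
      simp only [Finset.mem_filter, Finset.mem_univ, true_and]
      constructor
      · rintro ⟨k, hk⟩; exact ⟨k + 1, hk.trans (WalkN.single ha)⟩
      · rintro ⟨k, hk⟩; exact ⟨k + 1, hk.trans (WalkN.single ha.symm')⟩
    have hneu : (Finset.univ.filter (fun x => ∃ k, WalkN G W k x u)).Nonempty := by
      refine ⟨u, ?_⟩
      simp only [Finset.mem_filter, Finset.mem_univ, true_and]
      exact ⟨0, WalkN.nil ha.2.1⟩
    have hnev : (Finset.univ.filter (fun x => ∃ k, WalkN G W k x v)).Nonempty := by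
      refine ⟨v, ?_⟩
      simp only [Finset.mem_filter, Finset.mem_univ, true_and]
      exact ⟨0, WalkN.nil ha.2.2⟩
    have h1 : rep u = (Finset.univ.filter (fun x => ∃ k, WalkN G W k x u)).min' hneu := by
      rw [hrep]; exact dif_pos hneu
    have h2 : rep v = (Finset.univ.filter (fun x => ∃ k, WalkN G W k x v)).min' hnev := by
      rw [hrep]; exact dif_pos hnev
    rw [h1, h2]
    congr 1
  -- the coloring
  set c : Fin n → Prop := fun v => ∃ k, Even k ∧ WalkN G W k (rep v) v with hc
  have halt : ∀ u v, Adj G W u v → ¬ (c u ∧ c v) ∧ ¬ (¬ c u ∧ ¬ c v) := by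
    intro u v ha
    constructor
    · rintro ⟨⟨k1, hk1, hw1⟩, ⟨k2, hk2, hw2⟩⟩
      have hcl : WalkN G W (k1 + 1 + k2) (rep u) (rep u) := by
        have := (hw1.trans (WalkN.single ha)).trans ((rep_adj u v ha) ▸ hw2.symm)
        exact this
      apply hno (k1 + 1 + k2) (rep u) _ hcl
      rcases hk1 with ⟨a, rfl⟩
      rcases hk2 with ⟨b, rfl⟩
      exact ⟨a + b, by ring⟩
    · rintro ⟨h1, h2⟩
      obtain ⟨k1, hw1⟩ := rep_reach u ha.2.1
      obtain ⟨k2, hw2⟩ := rep_reach v ha.2.2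
      have ho1 : Odd k1 := by
        rcases Nat.even_or_odd k1 with he | ho
        · exact absurd ⟨k1, he, hw1⟩ h1
        · exact ho
      have ho2 : Odd k2 := by
        rcases Nat.even_or_odd k2 with he | ho
        · exact absurd ⟨k2, he, hw2⟩ h2
        · exact ho
      have hcl : WalkN G W (k1 + 1 + k2) (rep u) (rep u) :=
        (hw1.trans (WalkN.single ha)).trans ((rep_adj u v ha) ▸ hw2.symm)
      apply hno (k1 + 1 + k2) (rep u) _ hcl
      rcases ho1 with ⟨a, rfl⟩
      rcases ho2 with ⟨b, rfl⟩
      exact ⟨a + b + 1, by ring⟩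
  classical
  refine ⟨W.filter (fun v => c v), Finset.filter_subset _ _, ?_, ?_⟩
  · intro e he hsub
    obtain ⟨u, v, huv, rfl⟩ := Finset.card_eq_two.mp (G.card_eq e he)
    have hu := Finset.mem_filter.mp (hsub (show u ∈ ({u, v} : Finset (Fin n)) by simp))
    have hv := Finset.mem_filter.mp (hsub (show v ∈ ({u, v} : Finset (Fin n)) by simp))
    exact (halt u v ⟨he, hu.1, hv.1⟩).1 ⟨hu.2, hv.2⟩
  · intro e he hsub
    obtain ⟨u, v, huv, rfl⟩ := Finset.card_eq_two.mp (G.card_eq e he)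
    have hu := Finset.mem_sdiff.mp (hsub (show u ∈ ({u, v} : Finset (Fin n)) by simp))
    have hv := Finset.mem_sdiff.mp (hsub (show v ∈ ({u, v} : Finset (Fin n)) by simp))
    have hu2 : ¬ c u := fun hcu => hu.2 (Finset.mem_filter.mpr ⟨hu.1, hcu⟩)
    have hv2 : ¬ c v := fun hcv => hv.2 (Finset.mem_filter.mpr ⟨hv.1, hcv⟩)
    exact (halt u v ⟨he, hu.1, hv.1⟩).2 ⟨hu2, hv2⟩

theorem cycle_of_minimal (hW : ¬ TwoCol G W) (hmin : ∀ W' ⊂ W, TwoCol G W') :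
    IsInducedOddCycle G W := by
  classical
  have hex : ∃ k, Odd k ∧ ∃ v, WalkN G W k v v := by
    obtain ⟨k, v, hk, hw⟩ := exists_odd_closed_of_not_twoCol hW
    exact ⟨k, hk, v, hw⟩
  obtain ⟨hsodd, v, hwalk⟩ := Nat.find_spec hex
  set s := Nat.find hex with hsdef
  have hminwalk : ∀ m, m < s → ¬ (Odd m ∧ ∃ u, WalkN G W m u u) := fun m hm =>
    Nat.find_min hex hm
  have hs1 : s ≠ 1 := by
    intro h1
    rw [h1] at hwalk
    obtain ⟨w, ⟨hvw, hmemv⟩, ha⟩ := hwalk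
    subst hvw
    exact ha.ne rfl
  have hs3 : 3 ≤ s := by
    have := Nat.odd_iff.mp hsodd
    omega
  obtain ⟨f, hf0, hfs, hadj⟩ := hwalk.exists_fun
  have hfs0 : f s = f 0 := by rw [hfs, hf0]
  have hmemf : ∀ i, i ≤ s → f i ∈ W := by
    intro i hi
    rcases Nat.lt_or_ge i s with h' | h'
    · exact (hadj i h').2.1
    · have : i = s := by omega
      subst this
      rw [hfs0]
      exact (hadj 0 (by omega)).2.1
  -- segments of the walk
  have seg : ∀ a b, a ≤ b → b ≤ s → WalkN G W (b - a) (f a) (f b) := by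
    intro a b hab hbs
    have hW0 : (fun m => f (a + m)) 0 ∈ W := by
      simpa using hmemf a (by omega)
    have hadj' : ∀ i < b - a, Adj G W ((fun m => f (a + m)) i) ((fun m => f (a + m)) (i+1)) := by
      intro i hi
      simpa [← Nat.add_assoc] using hadj (a + i) (by omega)
    have := walk_of_fun (fun m => f (a + m)) (b - a) hadj' hW0
    simpa [Nat.add_sub_cancel' hab] using this
  -- injectivity on [0, s)
  have hinj : ∀ a b, a < b → b < s → f a ≠ f b := by
    intro a b hab hbs heq
    have w1 : WalkN G W (b - a) (f a) (f a) := by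
      have := seg a b (by omega) (by omega)
      rwa [← heq] at this
    have w2 : WalkN G W ((s - b) + a) (f b) (f b) := by
      have t1 := seg b s (by omega) (le_refl s)
      rw [hfs0] at t1
      have t2 := t1.trans (by simpa using seg 0 a (by omega) (by omega))
      rwa [heq] at t2
    rcases Nat.even_or_odd (b - a) with hev | hod
    · have hodd2 : Odd ((s - b) + a) := by
        rw [Nat.odd_iff] at hsodd ⊢
        rw [Nat.even_iff] at hev
        omega
      exact hminwalk _ (by omega) ⟨hodd2, f b, w2⟩
    · exact hminwalk _ (by omega) ⟨hod, f a, w1⟩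
  -- chordlessness
  have hchord : ∀ a b, a < b → b < s → ({f a, f b} : Finset (Fin n)) ∈ G.edges →
      b = a + 1 ∨ (a = 0 ∧ b = s - 1) := by
    intro a b hab hbs he
    by_contra hcon
    push_neg at hcon
    obtain ⟨hne1, hne2⟩ := hcon
    have hd2 : a + 2 ≤ b := by omega
    have hd2' : b - a ≤ s - 2 := by
      rcases Nat.lt_or_ge (b - a) (s - 1) with h' | h'
      · omega
      · exfalso
        have ha0 : a = 0 := by omega
        exact hne2 ha0 (by omega)
    have hadjab : Adj G W (f a) (f b) := ⟨he, hmemf a (by omega), hmemf b (by omega)⟩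
    have w1 : WalkN G W ((b - a) + 1) (f a) (f a) :=
      (seg a b (by omega) (by omega)).trans (WalkN.single hadjab.symm')
    have w2 : WalkN G W (1 + ((s - b) + a)) (f a) (f a) := by
      have t1 := seg b s (by omega) (le_refl s)
      rw [hfs0] at t1
      have t2 := t1.trans (by simpa using seg 0 a (by omega) (by omega))
      exact (WalkN.single hadjab).trans t2
    rcases Nat.even_or_odd ((b - a) + 1) with hev | hod
    · have hodd2 : Odd (1 + ((s - b) + a)) := by
        rw [Nat.odd_iff] at hsodd ⊢
        rw [Nat.even_iff] at hev
        omega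
      exact hminwalk _ (by omega) ⟨hodd2, f a, w2⟩
    · exact hminwalk _ (by omega) ⟨hod, f a, w1⟩
  -- the vertex set of the cycle
  haveI : NeZero s := ⟨by omega⟩
  haveI : Fact (1 < s) := ⟨by omega⟩
  set U : Finset (Fin n) := Finset.image (fun m : Fin s => f m.val) Finset.univ with hUdef
  have hUW : U ⊆ W := by
    intro x hx
    rw [hUdef, Finset.mem_image] at hx
    obtain ⟨m, _, rfl⟩ := hx
    exact hmemf m.val (by omega)
  have hinjF : Function.Injective (fun m : Fin s => f m.val) := by
    intro a b hab
    by_contra hne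
    rcases Nat.lt_or_ge a.val b.val with h' | h'
    · exact hinj a.val b.val h' b.isLt hab
    · have h'' : b.val < a.val := by
        rcases Nat.lt_or_ge b.val a.val with h2 | h2
        · exact h2
        · exact absurd (Fin.ext (by omega)) hne
      exact hinj b.val a.val h'' a.isLt hab.symm
  have hUcard : U.card = s := by
    rw [hUdef, Finset.card_image_of_injective _ hinjF, Finset.card_univ, Fintype.card_fin]
  -- index function on ZMod s
  have hgval : ∀ i : ZMod s, i.val < s := fun i => ZMod.val_lt i
  have hIU : IsInducedOddCycle G U := by
    rw [IsInducedOddCycle, hUcard]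
    refine ⟨hs3, hsodd, fun i => f i.val, ?_, ?_, ?_, ?_, ?_⟩
    · intro i j hij
      by_contra hne
      have hvne : i.val ≠ j.val := fun hc => hne (ZMod.val_injective s hc)
      rcases Nat.lt_or_ge i.val j.val with h' | h'
      · exact hinj i.val j.val h' (hgval j) hij
      · exact hinj j.val i.val (by omega) (hgval i) hij.symm
    · intro i
      rw [hUdef, Finset.mem_image]
      exact ⟨⟨i.val, hgval i⟩, Finset.mem_univ _, rfl⟩
    · intro w hw
      rw [hUdef, Finset.mem_image] at hw
      obtain ⟨m, _, rfl⟩ := hw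
      refine ⟨(m.val : ZMod s), ?_⟩
      show f ((m.val : ZMod s)).val = f m.val
      rw [ZMod.val_cast_of_lt m.isLt]
    · intro i
      show ({f i.val, f (i + 1).val} : Finset (Fin n)) ∈ G.edges
      have hv1 : (i + 1).val = (i.val + 1) % s := by
        rw [ZMod.val_add, ZMod.val_one]
      rcases Nat.lt_or_ge (i.val + 1) s with h' | h'
      · rw [hv1, Nat.mod_eq_of_lt h']
        exact (hadj i.val (hgval i)).1
      · have his : i.val + 1 = s := by have := hgval i; omega
        rw [hv1, his, Nat.mod_self]
        have := (hadj i.val (hgval i)).1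
        rw [show i.val + 1 = s from his, hfs0] at this
        exact this
    · intro e he hsub
      obtain ⟨x, y, hxy, rfl⟩ := Finset.card_eq_two.mp (G.card_eq e he)
      have hx := hsub (show x ∈ ({x, y} : Finset (Fin n)) by simp)
      have hy := hsub (show y ∈ ({x, y} : Finset (Fin n)) by simp)
      rw [hUdef, Finset.mem_image] at hx hy
      obtain ⟨ma, _, rfl⟩ := hx
      obtain ⟨mb, _, rfl⟩ := hy
      show ∃ i : ZMod s, ({f ma.val, f mb.val} : Finset (Fin n)) = {f i.val, f (i + 1).val}
      have key : ∀ a b : Fin s, a.val < b.val →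
          ({f a.val, f b.val} : Finset (Fin n)) ∈ G.edges →
          ∃ i : ZMod s, ({f a.val, f b.val} : Finset (Fin n)) =
            {f i.val, f (i + 1).val} := by
        intro a b hab hedge
        rcases hchord a.val b.val hab b.isLt hedge with h1 | ⟨h0, h1⟩
        · refine ⟨(a.val : ZMod s), ?_⟩
          rw [ZMod.val_cast_of_lt a.isLt]
          have : ((a.val : ZMod s) + 1).val = a.val + 1 := by
            rw [ZMod.val_add, ZMod.val_one, ZMod.val_cast_of_lt a.isLt,
              Nat.mod_eq_of_lt (by omega : a.val + 1 < s)]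
          rw [this, ← h1]
        · refine ⟨((s - 1 : ℕ) : ZMod s), ?_⟩
          have hv : ((s - 1 : ℕ) : ZMod s).val = s - 1 := ZMod.val_cast_of_lt (by omega)
          have hv2 : (((s - 1 : ℕ) : ZMod s) + 1).val = 0 := by
            rw [ZMod.val_add, ZMod.val_one, hv, Nat.sub_add_cancel (by omega), Nat.mod_self]
          rw [hv, hv2, h0, h1, Finset.pair_comm]
      rcases Nat.lt_or_ge ma.val mb.val with h' | h'
      · exact key ma mb h' he
      · have h'' : mb.val < ma.val := by
          rcases Nat.lt_or_ge mb.val ma.val with h2 | h2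
          · exact h2
          · exfalso
            exact hxy (congrArg f (by omega))
        rw [Finset.pair_comm] at he ⊢
        exact key mb ma h'' he
  have hUeqW : U = W := by
    by_contra hne
    exact not_twoCol_of_cycle G U hIU (hmin U (lt_of_le_of_ne hUW hne))
  exact hUeqW ▸ hIU

end Walks

/-- Let `G` be a finite simple graph with edge ideal `I = I(G)`.  A
squarefree monomial `∏_{i ∈ W} x_i` is a minimal monomial generator of the second secant
power `I^{2}` if and only if the induced subgraph of `G` on `W` is an induced odd
cycle. -/
theorem secant_sq_gens_iff_induced_odd_cycle {n : ℕ} (K : Type*) [Field K] (G : GraphOn n)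
    (W : Finset (Fin n)) :
    ((∏ i ∈ W, (X i : MvPolynomial (Fin n) K)) ∈ secantPower (edgeIdeal K G) 2 ∧
      ∀ W' ⊂ W, (∏ i ∈ W', (X i : MvPolynomial (Fin n) K)) ∉ secantPower (edgeIdeal K G) 2)
    ↔ IsInducedOddCycle G W := by
  constructor
  · rintro ⟨hmem, hmin⟩
    apply cycle_of_minimal
    · intro htc
      exact notMem_secant_of_twoCol K G W htc hmem
    · intro W' hW'
      by_contra hntc
      exact hmin W' hW' (mem_secant_of_not_twoCol K G W' hntc)
  · intro h
    refine ⟨mem_secant_of_not_twoCol K G W (not_twoCol_of_cycle G W h), ?_⟩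
    intro W' hW'
    exact notMem_secant_of_twoCol K G W' (twoCol_of_ssubset_cycle G W h W' hW')
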